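/- Let (M_k)_{k≥1} be invertible real n×n matrices, (Ω_k)_{k≥0} real symmetric positive semi-definite n×n matrices, and P_0 a real symmetric positive semi-definite n×n matrix. Define P_{k+1} = M_{k+1}(I + P_kΩ_k)⁻¹P_kM_{k+1}ᵀ and M_{k:0} = M_k⋯M_1. Then for every k ≥ 0, rank(P_k) = rank(P_0), and the column space of P_k equals the image of the column space of P_0 under M_{k:0}, i.e. Im(P_k) = M_{k:0}(Im(P_0)). -/

import Mathlib

open Matrix

/-- `Mres M l j` is the resolvent `M_{(l+j):l} = M_{l+j} ⋯ M_{l+1}`, so that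
`M_{k:0} = Mres M 0 k` and `M_{0:0} = 1`. -/
def Mres {n : ℕ} (M : ℕ → Matrix (Fin n) (Fin n) ℝ) (l : ℕ) :
    ℕ → Matrix (Fin n) (Fin n) ℝ
  | 0 => 1
  | j + 1 => M (l + j + 1) * Mres M l j

lemma dot_symm {n : ℕ} {A : Matrix (Fin n) (Fin n) ℝ} (hA : Aᵀ = A)
    (x y : Fin n → ℝ) : (A *ᵥ x) ⬝ᵥ y = x ⬝ᵥ (A *ᵥ y) := by
  rw [Matrix.dotProduct_mulVec, ← Matrix.mulVec_transpose, hA]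

lemma psd_transpose_eq {n : ℕ} {A : Matrix (Fin n) (Fin n) ℝ} (hA : A.PosSemidef) :
    Aᵀ = A := by
  rw [← Matrix.conjTranspose_eq_transpose_of_trivial]; exact hA.1

lemma isUnit_one_add_psd_mul {n : ℕ} {P Q : Matrix (Fin n) (Fin n) ℝ}
    (hP : P.PosSemidef) (hQ : Q.PosSemidef) : IsUnit (1 + P * Q) := by
  have hQt := psd_transpose_eq hQ
  rw [← Matrix.mulVec_injective_iff_isUnit]
  have key : ∀ x, (1 + P * Q) *ᵥ x = 0 → x = 0 := by
    intro x hx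
    rw [Matrix.add_mulVec, Matrix.one_mulVec, ← Matrix.mulVec_mulVec] at hx
    have h1 : 0 ≤ x ⬝ᵥ Q *ᵥ x := by simpa using hQ.dotProduct_mulVec_nonneg x
    have h2 : 0 ≤ (Q *ᵥ x) ⬝ᵥ P *ᵥ (Q *ᵥ x) := by simpa using hP.dotProduct_mulVec_nonneg (Q *ᵥ x)
    have hdot : (Q *ᵥ x) ⬝ᵥ (x + P *ᵥ (Q *ᵥ x)) = 0 := by rw [hx, dotProduct_zero]
    rw [dotProduct_add, dot_symm hQt] at hdot
    have hxQx : x ⬝ᵥ Q *ᵥ x = 0 := le_antisymm (by linarith) h1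
    have hQx : Q *ᵥ x = 0 := (hQ.dotProduct_mulVec_zero_iff x).mp (by simpa using hxQx)
    rw [hQx, Matrix.mulVec_zero, add_zero] at hx
    exact hx
  intro x y hxy
  have h0 : (1 + P * Q) *ᵥ (x - y) = 0 := by
    rw [Matrix.mulVec_sub, hxy, sub_self]
  exact sub_eq_zero.mp (key _ h0)

lemma comm_one_add {n : ℕ} (P Q : Matrix (Fin n) (Fin n) ℝ) :
    (1 + P * Q) * P = P * (1 + Q * P) := by
  rw [add_mul, one_mul, mul_add, mul_one, mul_assoc]

lemma inv_one_add_mul_eq {n : ℕ} {P Q : Matrix (Fin n) (Fin n) ℝ}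
    (hP : P.PosSemidef) (hQ : Q.PosSemidef) :
    (1 + P * Q)⁻¹ * P = P * (1 + Q * P)⁻¹ := by
  have hdet := (Matrix.isUnit_iff_isUnit_det _).mp (isUnit_one_add_psd_mul hP hQ)
  have hdet' := (Matrix.isUnit_iff_isUnit_det _).mp (isUnit_one_add_psd_mul hQ hP)
  calc (1 + P * Q)⁻¹ * P
      = (1 + P * Q)⁻¹ * ((P * (1 + Q * P)) * (1 + Q * P)⁻¹) := by
        rw [mul_assoc P, Matrix.mul_nonsing_inv _ hdet', mul_one]
    _ = (1 + P * Q)⁻¹ * (((1 + P * Q) * P) * (1 + Q * P)⁻¹) := by rw [comm_one_add]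
    _ = P * (1 + Q * P)⁻¹ := by
        rw [← mul_assoc, ← mul_assoc, Matrix.nonsing_inv_mul _ hdet, one_mul]

/-- `(1+PQ)⁻¹ P` is positive semidefinite. -/
lemma psd_inv_one_add_mul {n : ℕ} {P Q : Matrix (Fin n) (Fin n) ℝ}
    (hP : P.PosSemidef) (hQ : Q.PosSemidef) : ((1 + P * Q)⁻¹ * P).PosSemidef := by
  have hPt := psd_transpose_eq hP
  have hQt := psd_transpose_eq hQ
  have hdet' := (Matrix.isUnit_iff_isUnit_det _).mp (isUnit_one_add_psd_mul hQ hP)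
  have hkey := inv_one_add_mul_eq hP hQ
  refine Matrix.posSemidef_iff_dotProduct_mulVec.mpr ⟨?_, ?_⟩
  · rw [Matrix.IsHermitian, Matrix.conjTranspose_eq_transpose_of_trivial, hkey,
      Matrix.transpose_mul, Matrix.transpose_nonsing_inv, Matrix.transpose_add,
      Matrix.transpose_one, Matrix.transpose_mul, hPt, hQt]
    exact hkey
  · have key : ∀ y, 0 ≤ ((1 + Q * P) *ᵥ y) ⬝ᵥ (P *ᵥ y) := by
      intro y
      rw [Matrix.add_mulVec, Matrix.one_mulVec, add_dotProduct, ← Matrix.mulVec_mulVec,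
        dot_symm hQt]
      have h1 : 0 ≤ y ⬝ᵥ P *ᵥ y := by simpa using hP.dotProduct_mulVec_nonneg y
      have h2 : 0 ≤ (P *ᵥ y) ⬝ᵥ Q *ᵥ (P *ᵥ y) := by simpa using hQ.dotProduct_mulVec_nonneg (P *ᵥ y)
      linarith
    intro x
    have hxy : x = (1 + Q * P) *ᵥ ((1 + Q * P)⁻¹ *ᵥ x) := by
      rw [Matrix.mulVec_mulVec, Matrix.mul_nonsing_inv _ hdet', Matrix.one_mulVec]
    simp only [star_trivial]
    rw [hkey, ← Matrix.mulVec_mulVec]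
    nth_rewrite 1 [hxy]
    exact key _

lemma range_mul {n : ℕ} (A B : Matrix (Fin n) (Fin n) ℝ) :
    LinearMap.range (A * B).mulVecLin
      = Submodule.map A.mulVecLin (LinearMap.range B.mulVecLin) := by
  rw [Matrix.mulVecLin_mul, LinearMap.range_comp]

lemma range_mul_isUnit_right {n : ℕ} (A B : Matrix (Fin n) (Fin n) ℝ) (hB : IsUnit B) :
    LinearMap.range (A * B).mulVecLin = LinearMap.range A.mulVecLin := by
  rw [Matrix.mulVecLin_mul, LinearMap.range_comp_of_range_eq_top]
  rw [LinearMap.range_eq_top]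
  intro y
  refine ⟨B⁻¹ *ᵥ y, ?_⟩
  rw [Matrix.mulVecLin_apply, Matrix.mulVec_mulVec,
    Matrix.mul_nonsing_inv _ ((Matrix.isUnit_iff_isUnit_det _).mp hB), Matrix.one_mulVec]

/-- `(1+PΩ)⁻¹` preserves the column space of `P`. -/
lemma map_inv_range {n : ℕ} {P Q : Matrix (Fin n) (Fin n) ℝ}
    (hP : P.PosSemidef) (hQ : Q.PosSemidef) :
    Submodule.map ((1 + P * Q)⁻¹).mulVecLin (LinearMap.range P.mulVecLin)
      = LinearMap.range P.mulVecLin := by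
  have hU := isUnit_one_add_psd_mul hP hQ
  have hU' := isUnit_one_add_psd_mul hQ hP
  have hfwd : Submodule.map (1 + P * Q).mulVecLin (LinearMap.range P.mulVecLin)
      = LinearMap.range P.mulVecLin := by
    rw [← range_mul, comm_one_add, range_mul_isUnit_right _ _ hU']
  calc Submodule.map ((1 + P * Q)⁻¹).mulVecLin (LinearMap.range P.mulVecLin)
      = Submodule.map ((1 + P * Q)⁻¹).mulVecLin
          (Submodule.map (1 + P * Q).mulVecLin (LinearMap.range P.mulVecLin)) := by
        rw [hfwd]
    _ = Submodule.map (((1 + P * Q)⁻¹ * (1 + P * Q)).mulVecLin)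
          (LinearMap.range P.mulVecLin) := by
        rw [Matrix.mulVecLin_mul, Submodule.map_comp]
    _ = LinearMap.range P.mulVecLin := by
        rw [Matrix.nonsing_inv_mul _ ((Matrix.isUnit_iff_isUnit_det _).mp hU)]
        simp

/-- Perfect-model Kalman filter: the rank of `P_k` equals the rank of `P_0`, and
the column space of `P_k` is the image under `M_{k:0}` of the column space of
`P_0`: `Im(P_k) = M_{k:0}(Im(P_0))`. -/
theorem kf_rank_and_column_space {n : ℕ}
    (M Ω : ℕ → Matrix (Fin n) (Fin n) ℝ)
    (hM : ∀ k, 1 ≤ k → IsUnit (M k)) (hΩ : ∀ k, (Ω k).PosSemidef)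
    (P : ℕ → Matrix (Fin n) (Fin n) ℝ) (hP0 : (P 0).PosSemidef)
    (hrec : ∀ k, P (k + 1)
      = M (k + 1) * (1 + P k * Ω k)⁻¹ * P k * (M (k + 1))ᵀ) :
    ∀ k, (P k).rank = (P 0).rank ∧
      LinearMap.range (P k).mulVecLin
        = Submodule.map (Mres M 0 k).mulVecLin (LinearMap.range (P 0).mulVecLin) := by
  have hMresSucc : ∀ j, Mres M 0 (j + 1) = M (j + 1) * Mres M 0 j := by
    intro j; simp [Mres]
  have hMres : ∀ k, IsUnit (Mres M 0 k) := by
    intro k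
    induction k with
    | zero => simpa [Mres] using isUnit_one
    | succ j ih =>
      rw [hMresSucc]
      exact (hM (j + 1) (by omega)).mul ih
  have main : ∀ k, (P k).PosSemidef ∧
      LinearMap.range (P k).mulVecLin
        = Submodule.map (Mres M 0 k).mulVecLin (LinearMap.range (P 0).mulVecLin) := by
    intro k
    induction k with
    | zero =>
      refine ⟨hP0, ?_⟩
      simp [Mres]
    | succ j ih =>
      obtain ⟨hpsd, hrange⟩ := ih
      have hMj : IsUnit (M (j + 1)) := hM (j + 1) (by omega)
      have hT : IsUnit ((M (j + 1))ᵀ) := by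
        rwa [Matrix.isUnit_iff_isUnit_det, Matrix.det_transpose,
          ← Matrix.isUnit_iff_isUnit_det]
      constructor
      · rw [hrec j]
        have heq : M (j + 1) * (1 + P j * Ω j)⁻¹ * P j * (M (j + 1))ᵀ
            = (M (j + 1)) * ((1 + P j * Ω j)⁻¹ * P j) * ((M (j + 1))ᴴ) := by
          rw [Matrix.conjTranspose_eq_transpose_of_trivial,
            mul_assoc (M (j + 1)) (1 + P j * Ω j)⁻¹ (P j)]
        rw [heq]
        exact (psd_inv_one_add_mul hpsd (hΩ j)).mul_mul_conjTranspose_same _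
      · rw [hrec j, range_mul_isUnit_right _ _ hT, Matrix.mulVecLin_mul,
          LinearMap.range_comp, Matrix.mulVecLin_mul, Submodule.map_comp,
          map_inv_range hpsd (hΩ j), hrange, ← Submodule.map_comp,
          ← Matrix.mulVecLin_mul, ← hMresSucc]
  intro k
  obtain ⟨hpsd, hrange⟩ := main k
  refine ⟨?_, hrange⟩
  rw [Matrix.rank, Matrix.rank, hrange]
  have hinj : Function.Injective (Mres M 0 k).mulVecLin :=
    Matrix.mulVec_injective_iff_isUnit.mpr (hMres k)
  exact ((LinearMap.range (P 0).mulVecLin).equivMapOfInjective _ hinj).finrank_eq.symm
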